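/- arXiv:2007.09742 — 4 statements merged into one kernel-verified Lean document; each statement's English description precedes it below -/
import Mathlib

section
/- Naive A¹-homotopy fails to be transitive: on the scheme Spec k[x,y]/(xy), the k-points (0,1) and (0,0) are connected by a morphism from the affine line, and similarly (0,0) and (1,0), but there is no morphism h : Spec k[t] → Spec k[x,y]/(xy) with h(0) = (0,1) and h(1) = (1,0). -/
open Polynomial

/-- Naive `𝔸¹`-homotopy fails to be transitive: on `Spec k[x,y]/(xy)` (`k` an
integral domain), the points `(0,1)` and `(0,0)` are naively `𝔸¹`-homotopic (i.e.
connected by a map from the affine line, given by `f, g ∈ k[t]` with `fg = 0`), and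
so are `(0,0)` and `(1,0)`, but `(0,1)` and `(1,0)` are not. -/
theorem stmt10 {k : Type*} [CommRing k] [IsDomain k] :
    (∃ f g : Polynomial k, f * g = 0 ∧
      f.eval 0 = 0 ∧ g.eval 0 = 1 ∧ f.eval 1 = 0 ∧ g.eval 1 = 0) ∧
    (∃ f g : Polynomial k, f * g = 0 ∧
      f.eval 0 = 0 ∧ g.eval 0 = 0 ∧ f.eval 1 = 1 ∧ g.eval 1 = 0) ∧
    ¬ ∃ f g : Polynomial k, f * g = 0 ∧
      f.eval 0 = 0 ∧ g.eval 0 = 1 ∧ f.eval 1 = 1 ∧ g.eval 1 = 0 := by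
  refine ⟨⟨0, 1 - X, by ring, by simp, by simp, by simp, by simp⟩,
    ⟨X, 0, by ring, by simp, by simp, by simp, by simp⟩, ?_⟩
  rintro ⟨f, g, hfg, hf0, hg0, hf1, hg1⟩
  rcases mul_eq_zero.mp hfg with h | h
  · simp [h] at hf1
  · simp [h] at hg0
end

section
/- If f : Aⁿ → Aⁿ (given by polynomials) satisfies f(0) = 0 and the Jacobian determinant Jac(f)(0) is nonzero, then the local algebra Q₀(f) = k[x₁,…,xₙ]_(x₁,…,xₙ)/(f₁,…,fₙ) is a 1-dimensional k-vector space, and the EKL form equals the rank-one form ⟨Jac(f)(0)⟩. -/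
open MvPolynomial

set_option maxHeartbeats 1000000
set_option synthInstance.maxHeartbeats 400000

/-- If `f : 𝔸ⁿ → 𝔸ⁿ` is given by polynomials `f₁, …, fₙ` with `f(0) = 0` and the
Jacobian determinant `Jac(f)(0)` is nonzero, then the local algebra
`Q₀(f) = k[x₁,…,xₙ]_(x₁,…,xₙ)/(f₁,…,fₙ)` is a 1-dimensional `k`-vector space, and
for any presentation `fᵢ = Σⱼ aᵢⱼ xⱼ` (defining the socle element `E₀(f) = det(aᵢⱼ)`)
and any `k`-linear functional `η` with `η(E₀(f)) = 1`, the EKL form `(u,v) ↦ η(uv)`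
is isometric to the rank-one form `⟨Jac(f)(0)⟩`. -/
theorem stmt12 {k : Type*} [Field k] (n : ℕ) (f : Fin n → MvPolynomial (Fin n) k)
    (h0 : ∀ i, eval (0 : Fin n → k) (f i) = 0)
    (hJ : (Matrix.of fun i j => eval (0 : Fin n → k) (pderiv j (f i))).det ≠ 0) :
    letI P : Ideal (MvPolynomial (Fin n) k) := RingHom.ker (eval (0 : Fin n → k))
    haveI hP : P.IsPrime := RingHom.ker_isPrime _
    letI A := Localization.AtPrime P
    letI I : Ideal A := Ideal.span (Set.range fun i => algebraMap _ A (f i))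
    letI Q := A ⧸ I
    Module.finrank k Q = 1 ∧
    ∀ a : Matrix (Fin n) (Fin n) (MvPolynomial (Fin n) k),
      (∀ i, f i = ∑ j, a i j * X j) →
      ∀ η : Q →ₗ[k] k,
        η (Ideal.Quotient.mk I (algebraMap _ A (Matrix.det a))) = 1 →
        ∃ e : Q ≃ₗ[k] k, ∀ u v : Q,
          η (u * v) =
            (Matrix.of fun i j => eval (0 : Fin n → k) (pderiv j (f i))).det *
              (e u * e v) := by
  classical
  set P : Ideal (MvPolynomial (Fin n) k) := RingHom.ker (eval (0 : Fin n → k)) with hPdef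
  haveI hP : P.IsPrime := RingHom.ker_isPrime _
  set A := Localization.AtPrime P with hAdef
  set I : Ideal A := Ideal.span (Set.range fun i => algebraMap _ A (f i)) with hIdef
  -- ker of evaluation at 0 is the ideal generated by the variables
  have hkerX : P = Ideal.span (Set.range (X : Fin n → MvPolynomial (Fin n) k)) := by
    ext p
    rw [hPdef, RingHom.mem_ker, ← Set.image_univ, mem_ideal_span_X_image]
    rw [eval_zero, constantCoeff_eq]
    constructor
    · intro h m hm
      have hm0 : m ≠ 0 := by rintro rfl; exact (mem_support_iff.mp hm) h
      obtain ⟨i, hi⟩ := Finsupp.ne_iff.mp hm0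
      exact ⟨i, Set.mem_univ _, by simpa using hi⟩
    · intro h
      by_contra hc
      obtain ⟨i, -, hi⟩ := h 0 (mem_support_iff.mpr hc)
      simp at hi
  -- partial derivative computation
  have hpd : ∀ a : Matrix (Fin n) (Fin n) (MvPolynomial (Fin n) k),
      (∀ i, f i = ∑ j, a i j * X j) → ∀ i j,
      eval (0 : Fin n → k) (pderiv j (f i)) = eval (0 : Fin n → k) (a i j) := by
    intro a ha i j
    rw [ha i]
    simp [pderiv_X, Pi.single_apply, mul_ite, Finset.sum_ite_eq', eq_comm,
      apply_ite constantCoeff, Finset.sum_ite_eq]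
  have hdet : ∀ a : Matrix (Fin n) (Fin n) (MvPolynomial (Fin n) k),
      (∀ i, f i = ∑ j, a i j * X j) →
      eval (0 : Fin n → k) a.det
        = (Matrix.of fun i j => eval (0 : Fin n → k) (pderiv j (f i))).det := by
    intro a ha
    rw [RingHom.map_det]
    congr 1
    ext i j
    exact (hpd a ha i j).symm
  -- the f i generate the same ideal as the X j in A
  have hXmem : ∀ a : Matrix (Fin n) (Fin n) (MvPolynomial (Fin n) k),
      (∀ i, f i = ∑ j, a i j * X j) → ∀ j,
      algebraMap (MvPolynomial (Fin n) k) A (X j) ∈ I := by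
    intro a ha j
    set aA : Matrix (Fin n) (Fin n) A := a.map (algebraMap _ A) with haA
    have hdetu : IsUnit aA.det := by
      have hd : aA.det = algebraMap (MvPolynomial (Fin n) k) A a.det := by
        rw [haA]
        exact (RingHom.map_det (algebraMap (MvPolynomial (Fin n) k) A) a).symm
      rw [hd, IsLocalization.AtPrime.isUnit_to_map_iff A P]
      show a.det ∉ P
      intro hmem
      have hmem' : eval (0 : Fin n → k) a.det = 0 := RingHom.mem_ker.mp hmem
      exact hJ (by rw [← hdet a ha, hmem'])
    have hinv : aA⁻¹ * aA = 1 := Matrix.nonsing_inv_mul aA hdetu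
    have hF : ∀ i, algebraMap (MvPolynomial (Fin n) k) A (f i)
        = ∑ j', aA i j' * algebraMap (MvPolynomial (Fin n) k) A (X j') := by
      intro i
      rw [ha i, map_sum]
      simp [haA, Matrix.map_apply]
    have key : algebraMap (MvPolynomial (Fin n) k) A (X j)
        = ∑ i, aA⁻¹ j i * algebraMap (MvPolynomial (Fin n) k) A (f i) := by
      have : ∑ i, aA⁻¹ j i * algebraMap (MvPolynomial (Fin n) k) A (f i)
          = ∑ j', (aA⁻¹ * aA) j j' * algebraMap (MvPolynomial (Fin n) k) A (X j') := by
        have hv : (fun i => algebraMap (MvPolynomial (Fin n) k) A (f i))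
            = Matrix.mulVec aA (fun j' => algebraMap (MvPolynomial (Fin n) k) A (X j')) := by
          funext i; rw [hF i]; rfl
        change (Matrix.mulVec aA⁻¹ (fun i => algebraMap (MvPolynomial (Fin n) k) A (f i))) j
          = (Matrix.mulVec (aA⁻¹ * aA) (fun j' => algebraMap (MvPolynomial (Fin n) k) A (X j'))) j
        rw [hv, Matrix.mulVec_mulVec]
      rw [this, hinv]
      simp [Matrix.one_apply]
    rw [key]
    refine Ideal.sum_mem _ fun i _ => Ideal.mul_mem_left _ _ ?_
    exact Ideal.subset_span ⟨i, rfl⟩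
  -- the evaluation map on A
  have hu : ∀ y : P.primeCompl, IsUnit (eval (0 : Fin n → k) (y : MvPolynomial (Fin n) k)) := by
    intro y
    rw [isUnit_iff_ne_zero]
    exact fun h => y.2 (RingHom.mem_ker.mpr h)
  set φ : A →+* k := IsLocalization.lift hu with hφdef
  have hφ : ∀ p, φ (algebraMap (MvPolynomial (Fin n) k) A p) = eval (0 : Fin n → k) p :=
    fun p => IsLocalization.lift_eq hu p
  have hφsurj : Function.Surjective φ := fun c =>
    ⟨algebraMap (MvPolynomial (Fin n) k) A (C c), by rw [hφ]; simp⟩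
  -- obtain some matrix a₀
  have hfa : ∃ a₀ : Matrix (Fin n) (Fin n) (MvPolynomial (Fin n) k),
      ∀ i, f i = ∑ j, a₀ i j * X j := by
    have : ∀ i, ∃ c : Fin n → MvPolynomial (Fin n) k, ∑ j, c j * X j = f i := by
      intro i
      rw [← Ideal.mem_span_range_iff_exists_fun, ← hkerX, hPdef, RingHom.mem_ker]
      exact h0 i
    choose a₀ ha₀ using this
    exact ⟨Matrix.of a₀, fun i => (ha₀ i).symm⟩
  obtain ⟨a₀, ha₀⟩ := hfa
  -- I = ker φ
  have hIker : I = RingHom.ker φ := by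
    apply le_antisymm
    · rw [hIdef, Ideal.span_le]
      rintro x ⟨i, rfl⟩
      simp only [SetLike.mem_coe, RingHom.mem_ker]
      rw [hφ]; exact h0 i
    · have h1 : RingHom.ker φ ≤ IsLocalRing.maximalIdeal A := by
        apply IsLocalRing.le_maximalIdeal
        intro hT
        have : φ 1 = 0 := by
          have : (1 : A) ∈ RingHom.ker φ := by rw [hT]; trivial
          rwa [RingHom.mem_ker] at this
        simp at this
      have h2 : IsLocalRing.maximalIdeal A = P.map (algebraMap (MvPolynomial (Fin n) k) A) :=
        (Localization.AtPrime.map_eq_maximalIdeal).symm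
      have h3 : P.map (algebraMap (MvPolynomial (Fin n) k) A) ≤ I := by
        rw [Ideal.map_le_iff_le_comap]
        have hspan : Ideal.span (Set.range (X : Fin n → MvPolynomial (Fin n) k))
            ≤ Ideal.comap (algebraMap (MvPolynomial (Fin n) k) A) I := by
          rw [Ideal.span_le]
          rintro x ⟨j, rfl⟩
          exact hXmem a₀ ha₀ j
        exact fun p hp => hspan (hkerX ▸ hp)
      exact h1.trans (le_of_eq h2 |>.trans h3)
  -- the algebra isomorphism Q ≃ₐ[k] k
  set ψ : A ⧸ I →+* k := Ideal.Quotient.lift I φ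
    (fun x hx => by rw [hIker, RingHom.mem_ker] at hx; exact hx) with hψdef
  have hψmk : ∀ x : A, ψ (Ideal.Quotient.mk I x) = φ x := fun x => rfl
  have hψbij : Function.Bijective ψ := by
    constructor
    · intro x y hxy
      obtain ⟨x, rfl⟩ := Ideal.Quotient.mk_surjective x
      obtain ⟨y, rfl⟩ := Ideal.Quotient.mk_surjective y
      rw [Ideal.Quotient.mk_eq_mk_iff_sub_mem, hIker, RingHom.mem_ker, map_sub]
      rw [hψmk, hψmk] at hxy
      rw [hxy, sub_self]
    · intro c
      obtain ⟨y, hy⟩ := hφsurj c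
      exact ⟨Ideal.Quotient.mk I y, by rw [hψmk, hy]⟩
  have hcomm : ∀ c : k, ψ (algebraMap k (A ⧸ I) c) = c := by
    intro c
    rw [IsScalarTower.algebraMap_apply k A (A ⧸ I)]
    rw [Ideal.Quotient.algebraMap_eq, hψmk]
    rw [IsScalarTower.algebraMap_apply k (MvPolynomial (Fin n) k) A, hφ]
    simp [algebraMap_eq]
  set eAlg : (A ⧸ I) ≃ₐ[k] k := AlgEquiv.ofBijective ⟨ψ, hcomm⟩ hψbij with heAlgdef
  have heAlgapp : ∀ x : A, eAlg (Ideal.Quotient.mk I x) = φ x := fun x => rfl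
  set e₁ : (A ⧸ I) ≃ₗ[k] k := eAlg.toLinearEquiv with he₁def
  constructor
  · rw [e₁.finrank_eq, Module.finrank_self]
  · intro a ha η hη
    set J : k := (Matrix.of fun i j => eval (0 : Fin n → k) (pderiv j (f i))).det with hJdef
    have hdetJ : e₁ (Ideal.Quotient.mk I (algebraMap (MvPolynomial (Fin n) k) A a.det)) = J := by
      simp only [he₁def, AlgEquiv.toLinearEquiv_apply]
      rw [heAlgapp, hφ, hdet a ha]
    have hsmul : ∀ u : A ⧸ I, u = (e₁ u) • (1 : A ⧸ I) := by
      intro u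
      apply e₁.injective
      simp only [map_smul, he₁def, AlgEquiv.toLinearEquiv_apply, map_one,
        smul_eq_mul, mul_one]
    have hηu : ∀ u : A ⧸ I, η u = e₁ u * η 1 := by
      intro u
      conv_lhs => rw [hsmul u]
      rw [map_smul, smul_eq_mul]
    have hη1 : η 1 = J⁻¹ := by
      have := hη
      rw [hηu, hdetJ] at this
      field_simp
      rw [mul_comm]
      exact this
    refine ⟨e₁.trans (LinearEquiv.smulOfNeZero k k J⁻¹ (inv_ne_zero hJ)), ?_⟩
    intro u v
    have hmul : e₁ (u * v) = e₁ u * e₁ v := by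
      simp only [he₁def, AlgEquiv.toLinearEquiv_apply, map_mul]
    have happ : ∀ w : A ⧸ I,
        (e₁.trans (LinearEquiv.smulOfNeZero k k J⁻¹ (inv_ne_zero hJ))) w
          = J⁻¹ * e₁ w := fun w => rfl
    rw [hηu, hη1, hmul, happ, happ]
    field_simp
end

section
/- If Jac(f) is a nonzero element of the local algebra Q₀(f) for f = (f₁,…,fₙ) with isolated zero at the origin, then Jac(f) = dim_k(Q₀(f)) · E₀(f) in Q₀(f), in the special case n = 1: for f ∈ k[z] with f(0) = 0 and f = z·a(z), one has f'(z) = m·a(z) in k[z]_(z)/(f) where m = dim_k Q₀(f). -/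
open Polynomial

/-- The multiplicative set of polynomials not vanishing at `0`, so that
`Localization (evalNeZero k) = k[z]_(z)`. -/
def evalNeZero (k : Type*) [Field k] : Submonoid (Polynomial k) where
  carrier := {g | g.eval 0 ≠ 0}
  one_mem' := by simp
  mul_mem' := by
    intro a b ha hb
    simp only [Set.mem_setOf_eq, eval_mul] at *
    exact mul_ne_zero ha hb

set_option maxHeartbeats 1000000 in
set_option synthInstance.maxHeartbeats 400000 in
theorem stmt14_aux {k : Type*} [Field k] [CharZero k]
    (f a : Polynomial k) (hfa : f = X * a) (hf : f ≠ 0)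
    (m : ℕ) (hmdef : m = f.rootMultiplicity 0) :
    Module.finrank k ((Localization (evalNeZero k)) ⧸
        Ideal.span {algebraMap (Polynomial k) (Localization (evalNeZero k)) f}) = m ∧
    Ideal.Quotient.mk (Ideal.span {algebraMap (Polynomial k) (Localization (evalNeZero k)) f})
        (algebraMap (Polynomial k) (Localization (evalNeZero k)) (derivative f)) =
      m • Ideal.Quotient.mk
          (Ideal.span {algebraMap (Polynomial k) (Localization (evalNeZero k)) f})
          (algebraMap (Polynomial k) (Localization (evalNeZero k)) a) := by
  classical
  have hC0 : (X - C 0 : Polynomial k) = X := by rw [C_0, sub_zero]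
  set u : Polynomial k := f /ₘ X ^ m with hudef
  have hff : (X : Polynomial k) ^ m * u = f := by
    have := pow_mul_divByMonic_rootMultiplicity_eq f 0
    rwa [hC0, ← hmdef, ← hudef] at this
  have hu0 : u.eval 0 ≠ 0 := by
    have := eval_divByMonic_pow_rootMultiplicity_ne_zero 0 hf
    rwa [hC0, ← hmdef, ← hudef] at this
  have hm1 : 1 ≤ m := by
    rw [hmdef]
    exact (rootMultiplicity_pos hf).2 (by simp [hfa, IsRoot])
  have ha : a = X ^ (m - 1) * u := by
    apply mul_left_cancel₀ (X_ne_zero (R := k))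
    calc X * a = f := hfa.symm
      _ = X ^ m * u := hff.symm
      _ = X * (X ^ (m - 1) * u) := by
          rw [← mul_assoc, ← pow_succ', Nat.sub_add_cancel hm1]
  clear_value u
  clear hudef hmdef
  have hψ : ∀ p, (((Ideal.Quotient.mk (Ideal.span {algebraMap (Polynomial k) (Localization (evalNeZero k)) f})).comp
      (algebraMap (Polynomial k) (Localization (evalNeZero k)))) p)
      = Ideal.Quotient.mk (Ideal.span {algebraMap (Polynomial k) (Localization (evalNeZero k)) f})
        (algebraMap (Polynomial k) (Localization (evalNeZero k)) p) := fun _ => rfl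
  set ψ : Polynomial k →+* ((Localization (evalNeZero k)) ⧸ Ideal.span {algebraMap (Polynomial k) (Localization (evalNeZero k)) f}) :=
    (Ideal.Quotient.mk (Ideal.span {algebraMap (Polynomial k) (Localization (evalNeZero k)) f})).comp
      (algebraMap (Polynomial k) (Localization (evalNeZero k))) with hψdef
  have hfI : algebraMap (Polynomial k) (Localization (evalNeZero k)) f
      ∈ Ideal.span {algebraMap (Polynomial k) (Localization (evalNeZero k)) f} := Ideal.subset_span rfl
  have huunit : IsUnit (algebraMap (Polynomial k) (Localization (evalNeZero k)) u) :=
    IsLocalization.map_units (Localization (evalNeZero k)) (⟨u, hu0⟩ : evalNeZero k)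
  have hXmI : algebraMap (Polynomial k) (Localization (evalNeZero k)) (X ^ m)
      ∈ Ideal.span {algebraMap (Polynomial k) (Localization (evalNeZero k)) f} := by
    rw [← Ideal.unit_mul_mem_iff_mem _ huunit, ← map_mul, mul_comm, hff]
    exact hfI
  have hψXm : ψ (X ^ m) = 0 := Ideal.Quotient.eq_zero_iff_mem.2 hXmI
  have hψf : ψ f = 0 := Ideal.Quotient.eq_zero_iff_mem.2 hfI
  have hcop : ∀ q : Polynomial k, q.eval 0 ≠ 0 → IsCoprime ((X : Polynomial k) ^ m) q := by
    intro q hq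
    apply IsCoprime.pow_left
    rw [Polynomial.irreducible_X.coprime_iff_not_dvd]
    intro h
    exact hq (by simpa using dvd_iff_isRoot.mp (by simpa using h))
  set φ : Polynomial k →ₐ[k] ((Localization (evalNeZero k)) ⧸ Ideal.span {algebraMap (Polynomial k) (Localization (evalNeZero k)) f}) :=
    (Ideal.Quotient.mkₐ k (Ideal.span {algebraMap (Polynomial k) (Localization (evalNeZero k)) f})).comp
      (IsScalarTower.toAlgHom k (Polynomial k) (Localization (evalNeZero k))) with hφdef
  have hφψ : ∀ p, φ p = ψ p := fun _ => rfl
  have hsurj : Function.Surjective φ := by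
    intro x
    obtain ⟨y, rfl⟩ := Ideal.Quotient.mk_surjective x
    obtain ⟨⟨p, q⟩, hy⟩ := IsLocalization.mk'_surjective (evalNeZero k) y
    have hpq : y * algebraMap (Polynomial k) (Localization (evalNeZero k)) q = algebraMap (Polynomial k) (Localization (evalNeZero k)) p := by
      rw [← hy]; exact IsLocalization.mk'_spec (Localization (evalNeZero k)) p q
    obtain ⟨c, d, hcd⟩ := hcop q q.2
    refine ⟨d * p, ?_⟩
    have hdq : ψ (d * (q : Polynomial k)) = 1 := by
      have h1 : d * (q : Polynomial k) = 1 - c * X ^ m := by linear_combination hcd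
      rw [h1, map_sub, map_one, map_mul, hψXm]; ring
    have hψp : ψ p = Ideal.Quotient.mk _ y * ψ (q : Polynomial k) := by
      rw [hψdef, hψ, ← hpq, map_mul]; rfl
    calc φ (d * p) = ψ d * ψ p := by rw [hφψ, map_mul]
      _ = Ideal.Quotient.mk _ y * (ψ d * ψ (q : Polynomial k)) := by rw [hψp]; ring
      _ = Ideal.Quotient.mk _ y * ψ (d * (q : Polynomial k)) := by rw [map_mul]
      _ = Ideal.Quotient.mk _ y := by rw [hdq]; ring
  have halginj : Function.Injective (algebraMap (Polynomial k) (Localization (evalNeZero k))) := by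
    apply IsLocalization.injective (M := evalNeZero k)
    intro g hg
    exact mem_nonZeroDivisors_of_ne_zero (fun h => hg (by simp [h]))
  have hker : RingHom.ker φ = Ideal.span {(X : Polynomial k) ^ m} := by
    ext p
    rw [RingHom.mem_ker, Ideal.mem_span_singleton]
    constructor
    · intro hp
      have hpI : algebraMap (Polynomial k) (Localization (evalNeZero k)) p
          ∈ Ideal.span {algebraMap (Polynomial k) (Localization (evalNeZero k)) f} := by
        have h0 : ψ p = 0 := (hφψ p).symm.trans hp
        exact Ideal.Quotient.eq_zero_iff_mem.mp ((hψ p).symm.trans h0)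
      have hImap : Ideal.span {algebraMap (Polynomial k) (Localization (evalNeZero k)) f}
          = Ideal.map (algebraMap (Polynomial k) (Localization (evalNeZero k))) (Ideal.span {f}) := by
        rw [Ideal.map_span, Set.image_singleton]
      rw [hImap, IsLocalization.mem_map_algebraMap_iff (evalNeZero k)] at hpI
      obtain ⟨⟨⟨j, hj⟩, s⟩, hs⟩ := hpI
      rw [← map_mul] at hs
      have heq : p * (s : Polynomial k) = j := halginj hs
      obtain ⟨t, ht⟩ := Ideal.mem_span_singleton.mp hj
      have hdvd : (X : Polynomial k) ^ m ∣ p * (s : Polynomial k) := by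
        rw [heq, ht, ← hff]
        exact Dvd.dvd.mul_right (dvd_mul_right _ _) t
      exact (hcop s s.2).dvd_of_dvd_mul_right hdvd
    · rintro ⟨w, rfl⟩
      rw [hφψ, map_mul, hψXm]; ring
  have hXmne : ((X : Polynomial k) ^ m) ≠ 0 := pow_ne_zero _ X_ne_zero
  have hfr : Module.finrank k
      ((Localization (evalNeZero k)) ⧸ Ideal.span {algebraMap (Polynomial k) (Localization (evalNeZero k)) f}) = m := by
    have e1 := (Ideal.quotientKerAlgEquivOfSurjective hsurj).toLinearEquiv.finrank_eq
    rw [← e1]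
    refine ((Ideal.quotientEquivAlgOfEq k hker).toLinearEquiv.finrank_eq).trans ?_
    have e2 := (AdjoinRoot.powerBasis hXmne).finrank
    simp [AdjoinRoot.powerBasis] at e2
    exact e2
  refine ⟨hfr, ?_⟩
  have hid : u * derivative f = C ((m : k)) * (u * a) + f * derivative u := by
    rw [ha, ← hff, derivative_mul, derivative_X_pow]
    ring
  have hkey : ψ u * (ψ (derivative f) - m • ψ a) = 0 := by
    have h3 := congrArg ψ hid
    rw [map_mul, map_add, map_mul, map_mul, map_mul, hψf] at h3
    have hC : ψ (C ((m : k)))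
        = (m : (Localization (evalNeZero k)) ⧸ Ideal.span {algebraMap (Polynomial k) (Localization (evalNeZero k)) f}) := by
      rw [Polynomial.C_eq_natCast, map_natCast]
    rw [show m • ψ a = (m : _) * ψ a from nsmul_eq_mul m (ψ a)]
    linear_combination h3 + (ψ u * ψ a) * hC
  have huu : IsUnit (ψ u) := huunit.map (Ideal.Quotient.mk _)
  have h4 : ψ (derivative f) - m • ψ a = 0 := (huu.mul_right_eq_zero (b := ψ (derivative f) - m • ψ a)).mp hkey
  have h6 := sub_eq_zero.mp h4
  rw [hψdef, hψ, hψ] at h6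
  exact h6

/-- `Jac(f) = dim_k Q₀(f) · E₀(f)` in `Q₀(f)`, in the case `n = 1` and `char k = 0`:
for `f ∈ k[z]` with `f(0) = 0`, written `f = z · a(z)` (so `E₀(f) = a`), the image of
`f'` in `Q₀(f) = k[z]_(z)/(f)` equals `m` times the image of `a`, where
`m = dim_k Q₀(f)` (which equals the order of vanishing of `f` at `0`). -/
theorem stmt14 {k : Type*} [Field k] [CharZero k]
    (f a : Polynomial k) (hfa : f = X * a) (hf : f ≠ 0) :
    letI A := Localization (evalNeZero k)
    letI I : Ideal A := Ideal.span {algebraMap (Polynomial k) A f}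
    letI Q := A ⧸ I
    Module.finrank k Q = f.rootMultiplicity 0 ∧
    Ideal.Quotient.mk I (algebraMap (Polynomial k) A (derivative f)) =
      (Module.finrank k Q) •
        Ideal.Quotient.mk I (algebraMap (Polynomial k) A a) := by
  obtain ⟨h1, h2⟩ := stmt14_aux f a hfa hf (f.rootMultiplicity 0) rfl
  exact ⟨h1, by rw [h1]; exact h2⟩
end

section
/- The A¹-Milnor number of the cusp f(x,y) = x³ − y² over a field k with char k ∉ {2,3} is the hyperbolic form: the EKL class of grad f = (3x², −2y) at the origin equals ⟨1⟩ + ⟨−1⟩ in GW(k). Concretely, Q₀(grad f) ≅ k[x]/(x²) and the EKL form has Gram matrix congruent to [[0, 1/3],[1/3, 0]] scaled by ⟨−2⟩, which is the hyperbolic class. -/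
open Polynomial Matrix

/-- `k[x]/(x²)`, the local algebra `Q₀(grad f)` of the cusp `f(x,y) = x³ - y²`. -/
noncomputable abbrev QM (k : Type*) [Field k] : Type _ :=
  Polynomial k ⧸ Ideal.span {(X : Polynomial k) ^ 2}

/-- The class of `x` in `k[x]/(x²)`. -/
noncomputable def xQM (k : Type*) [Field k] : QM k :=
  Ideal.Quotient.mk _ (X : Polynomial k)

section Aux

variable {k : Type*} [Field k]


private lemma xQM_sq : (xQM k) * (xQM k) = 0 := by
  have : (xQM k) * (xQM k) = Ideal.Quotient.mk _ ((X : Polynomial k)^2) := by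
    rw [xQM, ← _root_.map_mul]; congr 1; ring
  rw [this, Ideal.Quotient.eq_zero_iff_mem]
  exact Ideal.subset_span rfl

private lemma xQM_pow : (xQM k) ^ 2 = 0 :=
  calc (xQM k)^2 = xQM k * xQM k := pow_two _
  _ = 0 := xQM_sq

private lemma QM_iso (h2 : (2 : k) ≠ 0) (h3 : (3 : k) ≠ 0) :
    Nonempty ((MvPolynomial (Fin 2) k ⧸
        Ideal.span {(MvPolynomial.C 3 * MvPolynomial.X 0 ^ 2 :
            MvPolynomial (Fin 2) k),
          MvPolynomial.C (-2) * MvPolynomial.X 1}) ≃ₐ[k] QM k) := by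
  set I : Ideal (MvPolynomial (Fin 2) k) := Ideal.span
    {MvPolynomial.C 3 * MvPolynomial.X 0 ^ 2, MvPolynomial.C (-2) * MvPolynomial.X 1} with hI
  -- forward
  set φ₀ : MvPolynomial (Fin 2) k →ₐ[k] QM k := MvPolynomial.aeval ![xQM k, 0] with hφ₀
  have hker : ∀ a ∈ I, φ₀ a = 0 := by
    have hle : I ≤ RingHom.ker (φ₀ : MvPolynomial (Fin 2) k →+* QM k) := by
      rw [hI, Ideal.span_le]
      rintro g (rfl | rfl) <;> simp only [SetLike.mem_coe, RingHom.mem_ker] <;>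
        show φ₀ _ = 0
      · rw [_root_.map_mul, map_pow]
        simp only [hφ₀, MvPolynomial.aeval_C, MvPolynomial.aeval_X]
        rw [show (![xQM k, 0] : Fin 2 → QM k) 0 = xQM k from rfl, xQM_pow, mul_zero]
      · rw [_root_.map_mul]
        simp only [hφ₀, MvPolynomial.aeval_X]
        rw [show (![xQM k, 0] : Fin 2 → QM k) 1 = 0 from rfl, mul_zero]
    exact fun a ha => hle ha
  set Φ : (MvPolynomial (Fin 2) k ⧸ I) →ₐ[k] QM k := Ideal.Quotient.liftₐ I φ₀ hker with hΦ
  -- backward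
  have hx0 : (Ideal.Quotient.mkₐ k I (MvPolynomial.X 0))^2 = 0 := by
    rw [Ideal.Quotient.mkₐ_eq_mk, ← map_pow, Ideal.Quotient.eq_zero_iff_mem]
    have h1 : (MvPolynomial.C 3 * MvPolynomial.X 0 ^ 2 : MvPolynomial (Fin 2) k) ∈ I :=
      Ideal.subset_span (Or.inl rfl)
    have := I.mul_mem_left (MvPolynomial.C (3:k)⁻¹) h1
    rwa [← mul_assoc, ← MvPolynomial.C_mul, inv_mul_cancel₀ h3, MvPolynomial.C_1, one_mul]
      at this
  set ψ₀ : Polynomial k →ₐ[k] (MvPolynomial (Fin 2) k ⧸ I) :=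
    Polynomial.aeval (Ideal.Quotient.mkₐ k I (MvPolynomial.X 0)) with hψ₀
  have hker2 : ∀ a ∈ Ideal.span {(X : Polynomial k)^2}, ψ₀ a = 0 := by
    have hle : Ideal.span {(X : Polynomial k)^2} ≤
        RingHom.ker (ψ₀ : Polynomial k →+* MvPolynomial (Fin 2) k ⧸ I) := by
      rw [Ideal.span_le]
      rintro g rfl
      simp only [SetLike.mem_coe, RingHom.mem_ker]
      show ψ₀ _ = 0
      rw [map_pow]
      simp only [hψ₀, Polynomial.aeval_X]
      exact hx0
    exact fun a ha => hle ha
  set Ψ : QM k →ₐ[k] (MvPolynomial (Fin 2) k ⧸ I) :=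
    Ideal.Quotient.liftₐ _ ψ₀ hker2 with hΨ
  have hy0 : Ideal.Quotient.mkₐ k I (MvPolynomial.X 1) = 0 := by
    rw [Ideal.Quotient.mkₐ_eq_mk, Ideal.Quotient.eq_zero_iff_mem]
    have h1 : (MvPolynomial.C (-2) * MvPolynomial.X 1 : MvPolynomial (Fin 2) k) ∈ I :=
      Ideal.subset_span (Or.inr rfl)
    have := I.mul_mem_left (MvPolynomial.C (-2:k)⁻¹) h1
    rwa [← mul_assoc, ← MvPolynomial.C_mul, inv_mul_cancel₀ (neg_ne_zero.mpr h2),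
      MvPolynomial.C_1, one_mul] at this
  refine ⟨AlgEquiv.ofAlgHom Φ Ψ ?_ ?_⟩
  · -- Φ ∘ Ψ = id on QM
    suffices h : (Φ.comp Ψ).comp (Ideal.Quotient.mkₐ k _) =
        (AlgHom.id k (QM k)).comp (Ideal.Quotient.mkₐ k _) by
      ext q
      obtain ⟨p, rfl⟩ := Ideal.Quotient.mk_surjective q
      exact DFunLike.congr_fun h p
    apply Polynomial.algHom_ext
    simp [Φ, Ψ, ψ₀, φ₀]
    change Φ (ψ₀ X) = _
    rw [hψ₀, Polynomial.aeval_X]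
    show φ₀ (MvPolynomial.X 0) = xQM k
    rw [hφ₀, MvPolynomial.aeval_X]
    rfl
  · -- Ψ ∘ Φ = id
    suffices h : (Ψ.comp Φ).comp (Ideal.Quotient.mkₐ k I) =
        (AlgHom.id k _).comp (Ideal.Quotient.mkₐ k I) by
      ext q
      obtain ⟨p, rfl⟩ := Ideal.Quotient.mk_surjective q
      exact DFunLike.congr_fun h p
    apply MvPolynomial.algHom_ext
    intro i
    fin_cases i
    · simp only [AlgHom.coe_comp, Function.comp_apply, Ideal.Quotient.mkₐ_eq_mk,
        AlgHom.coe_id, id_eq]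
      have h1 : Φ (Ideal.Quotient.mk I (MvPolynomial.X 0)) = xQM k := by
        show φ₀ (MvPolynomial.X 0) = xQM k
        rw [hφ₀, MvPolynomial.aeval_X]
        rfl
      show Ψ (Φ ((Ideal.Quotient.mk I) (MvPolynomial.X 0))) =
        (Ideal.Quotient.mk I) (MvPolynomial.X 0)
      rw [h1]
      show ψ₀ (X : Polynomial k) = _
      rw [hψ₀, Polynomial.aeval_X, Ideal.Quotient.mkₐ_eq_mk]
    · simp only [AlgHom.coe_comp, Function.comp_apply, Ideal.Quotient.mkₐ_eq_mk,
        AlgHom.coe_id, id_eq]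
      have h1 : Φ (Ideal.Quotient.mk I (MvPolynomial.X 1)) = 0 := by
        show φ₀ (MvPolynomial.X 1) = 0
        rw [hφ₀, MvPolynomial.aeval_X]
        rfl
      show Ψ (Φ ((Ideal.Quotient.mk I) (MvPolynomial.X 1))) =
        (Ideal.Quotient.mk I) (MvPolynomial.X 1)
      rw [h1, map_zero]
      rw [Ideal.Quotient.mkₐ_eq_mk] at hy0
      exact hy0.symm

lemma QM_basis : ∃ b : Module.Basis (Fin 2) k (QM k), b 0 = 1 ∧ b 1 = xQM k := by
  have hm : ((X : Polynomial k)^2).Monic := monic_X_pow 2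
  have hdeg : ((X : Polynomial k)^2).natDegree = 2 := by simp
  let pb := AdjoinRoot.powerBasis' hm
  have hdim : pb.dim = 2 := hdeg
  refine ⟨pb.basis.reindex (finCongr hdim), ?_, ?_⟩
  · erw [Module.Basis.reindex_apply]; rw [PowerBasis.basis_eq_pow]
    simp
    rfl
  · erw [Module.Basis.reindex_apply]; rw [PowerBasis.basis_eq_pow]
    have : (finCongr hdim).symm 1 = ⟨1, by omega⟩ := rfl
    rw [this]
    show AdjoinRoot.root _ ^ 1 = xQM k
    exact (pow_one (AdjoinRoot.root ((X : Polynomial k)^2))).trans rfl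

end Aux

/-- The `𝔸¹`-Milnor number of the cusp `f(x, y) = x³ - y²` over a field `k` with
`char k ∉ {2, 3}` is the hyperbolic form: for `grad f = (3x², -2y)` one has
`Q₀(grad f) ≅ k[x]/(x²)` with basis `{1, x}`, socle element `E₀ = -6x`, and for the
functional `η` with `η(1) = 0` and `η(x) = -1/6` (so `η(E₀) = 1`), the EKL form
`(u,v) ↦ η(uv)` has Gram matrix `[[0, -1/6], [-1/6, 0]]`, which is congruent to
`(-2) • [[0, 1/3], [1/3, 0]]`, to the hyperbolic matrix `[[0,1],[1,0]]`, and to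
`diag(1, -1)`; that is, `μ^{𝔸¹}₀(f) = ⟨1⟩ + ⟨-1⟩` in `GW(k)`. -/
theorem stmt15 {k : Type*} [Field k] (h2 : (2 : k) ≠ 0) (h3 : (3 : k) ≠ 0) :
    -- `Q₀(grad f) ≅ k[x]/(x²)`
    Nonempty ((MvPolynomial (Fin 2) k ⧸
        Ideal.span {(MvPolynomial.C 3 * MvPolynomial.X 0 ^ 2 :
            MvPolynomial (Fin 2) k),
          MvPolynomial.C (-2) * MvPolynomial.X 1}) ≃ₐ[k] QM k) ∧
    -- basis `{1, x}`, dimension 2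
    (∃ b : Module.Basis (Fin 2) k (QM k), b 0 = 1 ∧ b 1 = xQM k) ∧
    Module.finrank k (QM k) = 2 ∧
    -- the EKL form
    ∀ η : QM k →ₗ[k] k, η 1 = 0 → η (xQM k) = -(1 / 6) →
      -- `η(E₀) = η(-6x) = 1`
      η ((-6 : k) • xQM k) = 1 ∧
      ∀ G : Matrix (Fin 2) (Fin 2) k,
        G = Matrix.of ![![η (1 * 1), η (1 * xQM k)],
          ![η (xQM k * 1), η (xQM k * xQM k)]] →
        G = Matrix.of ![![0, -(1/6)], ![-(1/6), 0]] ∧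
        (∃ C : Matrix (Fin 2) (Fin 2) k, IsUnit C.det ∧
          Cᵀ * G * C = (-2 : k) • Matrix.of ![![0, 1/3], ![1/3, 0]]) ∧
        (∃ C : Matrix (Fin 2) (Fin 2) k, IsUnit C.det ∧
          Cᵀ * G * C = Matrix.of ![![0, 1], ![1, 0]]) ∧
        (∃ C : Matrix (Fin 2) (Fin 2) k, IsUnit C.det ∧
          Cᵀ * G * C = Matrix.diagonal ![1, -1]) := by
  have h6 : (6 : k) ≠ 0 := by
    have : (6 : k) = 2 * 3 := by norm_num
    rw [this]; exact mul_ne_zero h2 h3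
  have h4 : (4 : k) ≠ 0 := by
    have : (4 : k) = 2 * 2 := by norm_num
    rw [this]; exact mul_ne_zero h2 h2
  refine ⟨QM_iso h2 h3, QM_basis, ?_, ?_⟩
  · obtain ⟨b, -, -⟩ := QM_basis (k := k)
    rw [Module.finrank_eq_card_basis b, Fintype.card_fin]
  · intro η hη1 hηx
    constructor
    · rw [LinearMap.map_smul, hηx, smul_eq_mul]
      field_simp
    · intro G hG
      have hGval : G = Matrix.of ![![0, -(1/6)], ![-(1/6), 0]] := by
        rw [hG]
        congr 1
        have e1 : η ((1 : QM k) * 1) = 0 := by rw [one_mul]; exact hη1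
        have e2 : η ((1 : QM k) * xQM k) = -(1/6) := by rw [one_mul]; exact hηx
        have e3 : η (xQM k * 1) = -(1/6) := by rw [mul_one]; exact hηx
        have e4 : η (xQM k * xQM k) = 0 := by rw [xQM_sq, map_zero]
        rw [e1, e2, e3, e4]
      refine ⟨hGval, ?_, ?_, ?_⟩
      · refine ⟨Matrix.of ![![1, 0], ![0, 4]], ?_, ?_⟩
        · have hd : (Matrix.of ![![1, 0], ![0, 4]] : Matrix (Fin 2) (Fin 2) k).det = 4 := by
            rw [Matrix.det_fin_two_of]; norm_num
          rw [hd]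
          exact isUnit_iff_ne_zero.mpr h4
        · have hCT : (Matrix.of ![![(1:k), 0], ![0, 4]])ᵀ = Matrix.of ![![(1:k), 0], ![0, 4]] := by
            ext i j
            fin_cases i <;> fin_cases j <;> rfl
          rw [hGval, hCT, Matrix.mul_fin_two, Matrix.mul_fin_two]
          ext i j
          fin_cases i <;> fin_cases j <;>
            · simp [Matrix.smul_apply]
              try field_simp
              try ring
      · refine ⟨Matrix.of ![![1, 0], ![0, -6]], ?_, ?_⟩
        · have hd : (Matrix.of ![![1, 0], ![0, -6]] : Matrix (Fin 2) (Fin 2) k).det = -6 := by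
            rw [Matrix.det_fin_two_of]; norm_num
          rw [hd]
          exact isUnit_iff_ne_zero.mpr (neg_ne_zero.mpr h6)
        · have hCT : (Matrix.of ![![(1:k), 0], ![0, -6]])ᵀ
              = Matrix.of ![![(1:k), 0], ![0, -6]] := by
            ext i j
            fin_cases i <;> fin_cases j <;> rfl
          rw [hGval, hCT, Matrix.mul_fin_two, Matrix.mul_fin_two]
          ext i j
          fin_cases i <;> fin_cases j <;>
            · simp
              try field_simp
              try ring
      · refine ⟨Matrix.of ![![1, 1], ![-3, 3]], ?_, ?_⟩
        · have hd : (Matrix.of ![![1, 1], ![-3, 3]] : Matrix (Fin 2) (Fin 2) k).det = 6 := by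
            rw [Matrix.det_fin_two_of]; norm_num
          rw [hd]
          exact isUnit_iff_ne_zero.mpr h6
        · have hCT : (Matrix.of ![![(1:k), 1], ![-3, 3]])ᵀ
              = Matrix.of ![![(1:k), -3], ![1, 3]] := by
            ext i j
            fin_cases i <;> fin_cases j <;> rfl
          rw [hGval, hCT, Matrix.mul_fin_two, Matrix.mul_fin_two]
          ext i j
          fin_cases i <;> fin_cases j <;>
            · simp [Matrix.diagonal]
              try field_simp
              try ring
end
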